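/- Let n ≥ 0 and let A be a tournament payoff matrix of size 2n+1. Suppose the game is weakly playable: for every index i there exist probability vectors x, y with all entries of A.mulVec x and A.mulVec y nonpositive (a Nash equilibrium) and x i > 0. Then there exists a unique probability vector v with A.mulVec v = 0; this v satisfies v i > 0 for all i; and every Nash equilibrium (x, y) (i.e., every pair of probability vectors with A.mulVec x ≤ 0 and A.mulVec y ≤ 0 entrywise) satisfies x = y = v. In particular the weakly playable RPS has a unique Nash equilibrium, which is symmetric and totally mixed. -/

import Mathlib

open Matrix

/-- A probability vector: nonnegative entries summing to `1`. -/
def IsProbVec {m : ℕ} (v : Fin m → ℝ) : Prop := (∀ i, 0 ≤ v i) ∧ ∑ i, v i = 1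

/-- A tournament payoff matrix: zero diagonal, off-diagonal entries `±1`,
skew-symmetric. -/
def IsTournament {m : ℕ} (A : Matrix (Fin m) (Fin m) ℝ) : Prop :=
  (∀ i, A i i = 0) ∧ ∀ i j : Fin m, i ≠ j → (A i j = 1 ∨ A i j = -1) ∧ A j i = -A i j

lemma tourn_skew {m : ℕ} {A : Matrix (Fin m) (Fin m) ℝ} (hA : IsTournament A)
    (j k : Fin m) : A k j = - A j k := by
  by_cases h : j = k
  · subst h; simp [hA.1 j]
  · exact (hA.2 j k h).2

lemma pairing {m : ℕ} {A : Matrix (Fin m) (Fin m) ℝ} (hA : IsTournament A)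
    {x y : Fin m → ℝ} (hx : IsProbVec x) (hy : IsProbVec y)
    (hEx : ∀ j, A.mulVec x j ≤ 0) (hEy : ∀ j, A.mulVec y j ≤ 0) :
    ∀ i, 0 < x i → A.mulVec y i = 0 := by
  have key : ∑ j, x j * A.mulVec y j = - ∑ k, y k * A.mulVec x k := by
    simp only [Matrix.mulVec, dotProduct, Finset.mul_sum, ← Finset.sum_neg_distrib]
    rw [Finset.sum_comm]
    refine Finset.sum_congr rfl fun j _ => Finset.sum_congr rfl fun k _ => ?_
    rw [tourn_skew hA k j]; ring
  have h1 : ∑ j, x j * A.mulVec y j ≤ 0 :=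
    Finset.sum_nonpos fun j _ => mul_nonpos_of_nonneg_of_nonpos (hx.1 j) (hEy j)
  have h2 : (0 : ℝ) ≤ ∑ j, x j * A.mulVec y j := by
    rw [key, le_neg, neg_zero]
    exact Finset.sum_nonpos fun k _ => mul_nonpos_of_nonneg_of_nonpos (hy.1 k) (hEx k)
  have h0 : ∑ j, x j * A.mulVec y j = 0 := le_antisymm h1 h2
  intro i hi
  have := (Finset.sum_eq_zero_iff_of_nonpos
    (fun j _ => mul_nonpos_of_nonneg_of_nonpos (hx.1 j) (hEy j))).mp h0 i (Finset.mem_univ i)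
  exact (mul_eq_zero.mp this).resolve_left (ne_of_gt hi)

lemma submatrix_det_ne_zero (n : ℕ) (A : Matrix (Fin (2*n+1)) (Fin (2*n+1)) ℝ)
    (hA : IsTournament A) (i : Fin (2*n+1)) :
    (A.submatrix i.succAbove i.succAbove).det ≠ 0 := by
  set B : Matrix (Fin (2*n)) (Fin (2*n)) ℤ :=
    Matrix.of fun j k => if j = k then 0
      else if A (i.succAbove j) (i.succAbove k) = 1 then 1 else -1 with hB
  have hmap : (B.map (Int.cast : ℤ → ℝ)) = A.submatrix i.succAbove i.succAbove := by
    ext j k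
    by_cases h : j = k
    · subst h; simp [hB, hA.1]
    · have hne : i.succAbove j ≠ i.succAbove k :=
        fun hc => h (Fin.succAbove_right_injective hc)
      rcases (hA.2 _ _ hne).1 with h1 | h1
      · simp [hB, h, h1]
      · simp [hB, h, h1, show (-1:ℝ) ≠ 1 by norm_num]
  -- mod 2
  set J : Matrix (Fin (2*n)) (Fin (2*n)) (ZMod 2) := Matrix.of fun _ _ => 1 with hJ
  have h2 : (B.map (Int.cast : ℤ → ZMod 2)) = J + 1 := by
    ext j k
    by_cases h : j = k
    · subst h; simp [hB, hJ, Matrix.one_apply]; decide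
    · simp only [hB, Matrix.map_apply, Matrix.of_apply, if_neg h, Matrix.add_apply, hJ,
        Matrix.one_apply, if_neg h, add_zero]
      split_ifs <;> decide
  have hJJ : J * J = 0 := by
    ext j k
    simp only [Matrix.mul_apply, hJ, Matrix.of_apply, one_mul, Finset.sum_const,
      Finset.card_univ, Fintype.card_fin, Matrix.zero_apply, nsmul_eq_mul, mul_one]
    rw [show ((2*n : ℕ) : ZMod 2) = 0 from (ZMod.natCast_eq_zero_iff _ _).mpr ⟨n, rfl⟩]
  have hJ2 : J + J = 0 := by
    ext j k; simp [hJ]; decide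
  have hsq : (J + 1) * (J + 1) = 1 := by
    rw [mul_add, add_mul, add_mul, mul_one, one_mul, hJJ, one_mul, zero_add, ← add_assoc,
      hJ2, zero_add]
  have hdet2 : ((B.det : ℤ) : ZMod 2) ≠ 0 := by
    have h3 : ((B.det : ℤ) : ZMod 2) = (B.map (Int.cast : ℤ → ZMod 2)).det := by
      have := (Int.castRingHom (ZMod 2)).map_det B
      rwa [RingHom.mapMatrix_apply] at this
    rw [h3, h2]
    intro h
    have hcon := congrArg Matrix.det hsq
    rw [Matrix.det_mul, h, zero_mul, Matrix.det_one] at hcon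
    exact zero_ne_one hcon
  have hBdet : B.det ≠ 0 := fun h => hdet2 (by rw [h]; simp)
  have h4 := (Int.castRingHom ℝ).map_det B
  simp only [RingHom.mapMatrix_apply, Int.coe_castRingHom] at h4
  rw [← hmap, ← h4]
  exact_mod_cast hBdet

lemma kernel_prob_pos (n : ℕ) (A : Matrix (Fin (2*n+1)) (Fin (2*n+1)) ℝ)
    (hA : IsTournament A) (p : Fin (2*n+1) → ℝ) (hp : IsProbVec p)
    (hker : A.mulVec p = 0) : ∀ i, 0 < p i := by
  intro i
  rcases (hp.1 i).lt_or_eq with h | h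
  · exact h
  · exfalso
    have hpi : p i = 0 := h.symm
    have hmv : (A.submatrix i.succAbove i.succAbove).mulVec
        (fun j => p (i.succAbove j)) = 0 := by
      funext j
      have hj : A.mulVec p (i.succAbove j) = 0 := congrFun hker (i.succAbove j)
      rw [Matrix.mulVec, dotProduct] at hj
      rw [Fin.sum_univ_succAbove (fun l => A (i.succAbove j) l * p l) i, hpi, mul_zero,
        zero_add] at hj
      simpa [Matrix.mulVec, dotProduct, Matrix.submatrix] using hj
    have hz := Matrix.eq_zero_of_mulVec_eq_zero
      (submatrix_det_ne_zero n A hA i) hmv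
    have hall : ∀ l, p l = 0 := by
      intro l
      by_cases hl : l = i
      · rw [hl]; exact hpi
      · obtain ⟨k, hk⟩ := Fin.exists_succAbove_eq hl
        rw [← hk]
        exact congrFun hz k
    have := hp.2
    rw [Finset.sum_eq_zero (fun l _ => hall l)] at this
    exact zero_ne_one this

lemma kernel_prob_unique (n : ℕ) (A : Matrix (Fin (2*n+1)) (Fin (2*n+1)) ℝ)
    (hA : IsTournament A) (v w : Fin (2*n+1) → ℝ) (hv : IsProbVec v) (hw : IsProbVec w)
    (hv0 : A.mulVec v = 0) (hw0 : A.mulVec w = 0) : v = w := by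
  by_contra hne
  have hex : ∃ i, w i < v i := by
    by_contra hc
    push_neg at hc
    apply hne
    funext i
    have hsum : ∑ j, v j = ∑ j, w j := hv.2.trans hw.2.symm
    exact (Finset.sum_eq_sum_iff_of_le (fun j _ => hc j)).mp hsum i (Finset.mem_univ i)
  set S : Finset (Fin (2*n+1)) := Finset.univ.filter (fun i => w i < v i) with hS
  have hSne : S.Nonempty := by
    obtain ⟨i, hi⟩ := hex
    exact ⟨i, by simp [hS, hi]⟩
  obtain ⟨i₀, hi₀S, hi₀min⟩ := Finset.exists_min_image S (fun i => v i / (v i - w i)) hSne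
  have hi₀lt : w i₀ < v i₀ := by simpa [hS] using hi₀S
  have hden : 0 < v i₀ - w i₀ := sub_pos.mpr hi₀lt
  set t : ℝ := v i₀ / (v i₀ - w i₀) with ht
  have ht0 : 0 < t := div_pos (lt_of_le_of_lt (hw.1 i₀) hi₀lt) hden
  set p : Fin (2*n+1) → ℝ := fun j => v j + t * (w j - v j) with hp
  have hpnn : ∀ j, 0 ≤ p j := by
    intro j
    show 0 ≤ v j + t * (w j - v j)
    by_cases hj : w j < v j
    · have hjS : j ∈ S := by simp [hS, hj]
      have hle : t ≤ v j / (v j - w j) := hi₀min j hjS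
      have hdenj : 0 < v j - w j := sub_pos.mpr hj
      have h1 : t * (v j - w j) ≤ v j := (le_div_iff₀ hdenj).mp hle
      linarith
    · exact add_nonneg (hv.1 j)
        (mul_nonneg ht0.le (sub_nonneg.mpr (le_of_not_gt hj)))
  have hpi₀ : p i₀ = 0 := by
    rw [hp]
    field_simp [ht]
    have h5 : t * (v i₀ - w i₀) = v i₀ := div_mul_cancel₀ _ hden.ne'
    linear_combination -h5
  have hpsum : ∑ j, p j = 1 := by
    simp only [hp]
    rw [Finset.sum_add_distrib, ← Finset.mul_sum, Finset.sum_sub_distrib, hv.2, hw.2]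
    ring
  have hpker : A.mulVec p = 0 := by
    have hpeq : p = v + t • (w - v) := by funext j; simp [hp]
    rw [hpeq, Matrix.mulVec_add, Matrix.mulVec_smul, Matrix.mulVec_sub, hv0, hw0]
    simp
  have := kernel_prob_pos n A hA p ⟨hpnn, hpsum⟩ hpker i₀
  rw [hpi₀] at this
  exact lt_irrefl 0 this


/-- A weakly playable `(2n+1)`-object RPS game has a unique Nash equilibrium, which is
symmetric and totally mixed: there is a unique probability vector `v` in the kernel of
the payoff matrix, it is everywhere positive, and every Nash equilibrium `(x, y)`
(i.e. every pair of probability vectors with `A.mulVec x` and `A.mulVec y` entrywise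
nonpositive) satisfies `x = y = v`. -/
theorem weakly_playable_RPS_unique_nash (n : ℕ)
    (A : Matrix (Fin (2 * n + 1)) (Fin (2 * n + 1)) ℝ) (hA : IsTournament A)
    (hweak : ∀ i : Fin (2 * n + 1), ∃ x y : Fin (2 * n + 1) → ℝ,
      IsProbVec x ∧ IsProbVec y ∧ (∀ j, A.mulVec x j ≤ 0) ∧ (∀ j, A.mulVec y j ≤ 0) ∧
        0 < x i) :
    ∃ v : Fin (2 * n + 1) → ℝ, (IsProbVec v ∧ A.mulVec v = 0) ∧
      (∀ v' : Fin (2 * n + 1) → ℝ, IsProbVec v' → A.mulVec v' = 0 → v' = v) ∧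
      (∀ i, 0 < v i) ∧
      (∀ x y : Fin (2 * n + 1) → ℝ, IsProbVec x → IsProbVec y →
        (∀ j, A.mulVec x j ≤ 0) → (∀ j, A.mulVec y j ≤ 0) → x = v ∧ y = v) := by
  have equil_ker : ∀ y : Fin (2*n+1) → ℝ, IsProbVec y → (∀ j, A.mulVec y j ≤ 0) →
      A.mulVec y = 0 := by
    intro y hy hEy
    funext i
    obtain ⟨x, x', hx, hx', hEx, hEx', hxi⟩ := hweak i
    exact pairing hA hx hy hEx hEy i hxi
  obtain ⟨v, v', hv, hv', hEv, hEv', hv0⟩ := hweak ⟨0, by omega⟩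
  have hvker : A.mulVec v = 0 := equil_ker v hv hEv
  refine ⟨v, ⟨hv, hvker⟩, ?_, kernel_prob_pos n A hA v hv hvker, ?_⟩
  · intro u hu huker
    exact kernel_prob_unique n A hA u v hu hv huker hvker
  · intro x y hx hy hEx hEy
    exact ⟨kernel_prob_unique n A hA x v hx hv (equil_ker x hx hEx) hvker,
      kernel_prob_unique n A hA y v hy hv (equil_ker y hy hEy) hvker⟩
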